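/- Any PID definition whose unique information UI(M:X\Y) depends only on the marginal pair (P_{MX}, P_{MY}) and satisfies UI(M:X\Y) ≤ I_Q(M;X|Y) for all Q with the same (M,X)- and (M,Y)-marginals, is upper bounded by the tilde-unique information: UI(M:X\Y) ≤ min_{Q ∈ Δ_P} I_Q(M;X|Y). In particular, if the tilde-unique information is 0 then UI(M:X\Y) = 0 for any such non-negative UI. -/
import Mathlib


open Real BigOperators Finset

/-- Mutual information I(A;B) of a joint pmf `q` on A × B (in nats). -/
noncomputable def mi {A B : Type} [Fintype A] [Fintype B] (q : A → B → ℝ) : ℝ :=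
  ∑ a, ∑ b, q a b * Real.log (q a b / ((∑ b', q a b') * (∑ a', q a' b)))

/-- Conditional mutual information I(A;B|C) of a joint pmf `q` on A × B × C (in nats). -/
noncomputable def cmi {A B C : Type} [Fintype A] [Fintype B] [Fintype C]
    (q : A → B → C → ℝ) : ℝ :=
  ∑ a, ∑ b, ∑ c, q a b c * Real.log
    (q a b c * (∑ a', ∑ b', q a' b' c) / ((∑ b', q a b' c) * (∑ a', q a' b c)))

/-- A (row-stochastic) channel from A to B. -/
structure Channel (A B : Type) [Fintype A] [Fintype B] where
  k : A → B → ℝ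
  nonneg : ∀ a b, 0 ≤ k a b
  sum_one : ∀ a, ∑ b, k a b = 1

/-- `p` is a joint pmf on M × X × Y. -/
def IsPMF3 {M X Y : Type} [Fintype M] [Fintype X] [Fintype Y] (p : M → X → Y → ℝ) : Prop :=
  (∀ m x y, 0 ≤ p m x y) ∧ ∑ m, ∑ x, ∑ y, p m x y = 1

/-- The information deficiency δ^I(M : X \ Y): the supremum, over all channels P_{T|M}
(with finite alphabet T, so that T—M—(X,Y) is a Markov chain), of I(T;X) − I(T;Y),
where the joint of (T,M,X,Y) is P(t,m,x,y) = P_{T|M}(t|m)·P_{MXY}(m,x,y). -/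
noncomputable def deltaI {M X Y : Type} [Fintype M] [Fintype X] [Fintype Y]
    (p : M → X → Y → ℝ) : ℝ :=
  sSup { d : ℝ | ∃ (n : ℕ) (c : Channel M (Fin n)),
    d = mi (fun t x => ∑ m, ∑ y, c.k m t * p m x y)
      - mi (fun t y => ∑ m, ∑ x, c.k m t * p m x y) }

/-- any PID whose unique information UI is non-negative, depends only on
the marginal pair (P_{MX}, P_{MY}) and satisfies UI ≤ I_Q(M;X|Y) for every Q with those
marginals, is upper bounded by the tilde-unique information min_{Q ∈ Δ_P} I_Q(M;X|Y);
in particular if the latter is 0 then UI(M:X\Y) = 0. -/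
theorem UI_le_tildeUI {M X Y : Type} [Fintype M] [Fintype X] [Fintype Y]
    (UI : (M → X → Y → ℝ) → ℝ)
    (hnonneg : ∀ P : M → X → Y → ℝ, IsPMF3 P → 0 ≤ UI P)
    (hmarg : ∀ P Q : M → X → Y → ℝ, IsPMF3 P → IsPMF3 Q →
      (∀ m x, ∑ y, P m x y = ∑ y, Q m x y) →
      (∀ m y, ∑ x, P m x y = ∑ x, Q m x y) → UI P = UI Q)
    (hbound : ∀ P : M → X → Y → ℝ, IsPMF3 P → UI P ≤ cmi P)
    (P : M → X → Y → ℝ) (hP : IsPMF3 P)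
    -- Q is a minimizer of I_Q(M;X|Y) over Δ_P:
    (Q : M → X → Y → ℝ) (hQ : IsPMF3 Q)
    (hQX : ∀ m x, ∑ y, Q m x y = ∑ y, P m x y)
    (hQY : ∀ m y, ∑ x, Q m x y = ∑ x, P m x y)
    (hmin : ∀ Q' : M → X → Y → ℝ, IsPMF3 Q' →
      (∀ m x, ∑ y, Q' m x y = ∑ y, P m x y) →
      (∀ m y, ∑ x, Q' m x y = ∑ x, P m x y) →
      cmi Q ≤ cmi Q') :
    UI P ≤ cmi Q ∧ (cmi Q = 0 → UI P = 0) := by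
  have h1 : UI P = UI Q :=
    hmarg P Q hP hQ (fun m x => (hQX m x).symm) (fun m y => (hQY m y).symm)
  have h2 : UI P ≤ cmi Q := h1 ▸ hbound Q hQ
  exact ⟨h2, fun h0 => le_antisymm (h0 ▸ h2) (hnonneg P hP)⟩
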